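/- Let λ and i be real numbers with (1/2)i² + (1/2)i − 1 = λ and i ≠ −1/2, and let j be a natural number. Then there exist real numbers b₁, …, b_{j+1} with b_{j+1} = ((j+1)(i + 1/2))⁻¹ such that the function u(x) = x^i · Σ_{m=1}^{j+1} b_m (log x)^m satisfies (1/2)x²u''(x) + x u'(x) − (1+λ)u(x) = x^i (log x)^j for all x ∈ (0,∞). -/

import Mathlib

open Finset Real

/-- Coefficients for the resonant step, defined by downward recursion
(`resCoeff i j k` is `b (j+1-k)`). -/
noncomputable def resCoeff (i : ℝ) (j : ℕ) : ℕ → ℝ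
  | 0 => (((j : ℝ) + 1) * (i + 1/2))⁻¹
  | (k+1) => (-(((j : ℝ) + 1 - (k : ℝ)) / (2 * (i + 1/2)))) * resCoeff i j k

lemma poly_key (c : ℝ) (j : ℕ) (b : ℕ → ℝ)
    (hrec : ∀ k ∈ Finset.Icc 1 j,
      c * (k : ℝ) * b k + (1/2) * ((k:ℝ)+1) * (k:ℝ) * b (k+1) = 0)
    (htop : c * ((j:ℝ)+1) * b (j+1) = 1) (t : ℝ) :
    (1/2) * (∑ m ∈ Finset.Icc 1 (j+1), b m * ((m:ℝ) * (((m-1:ℕ):ℝ) * t^(m-1-1)))) +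
      c * (∑ m ∈ Finset.Icc 1 (j+1), b m * ((m:ℝ) * t^(m-1))) = t^j := by
  have h2 : (∑ m ∈ Finset.Icc 1 (j+1), b m * ((m:ℝ) * (((m-1:ℕ):ℝ) * t^(m-1-1))))
      = ∑ k ∈ Finset.Icc 1 j, b (k+1) * (((k:ℝ)+1) * ((k:ℝ) * t^(k-1))) := by
    rw [← Finset.sum_subset (Finset.Icc_subset_Icc_left (by omega) :
        Finset.Icc 2 (j+1) ⊆ Finset.Icc 1 (j+1))]
    · refine Finset.sum_nbij' (fun m => m - 1) (fun k => k + 1) ?_ ?_ ?_ ?_ ?_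
      · intro m hm; simp only [Finset.mem_Icc] at hm ⊢; omega
      · intro k hk; simp only [Finset.mem_Icc] at hk ⊢; omega
      · intro m hm; simp only [Finset.mem_Icc] at hm; omega
      · intro k hk; simp only [Finset.mem_Icc] at hk; omega
      · intro m hm
        simp only [Finset.mem_Icc] at hm
        obtain ⟨m, rfl⟩ : ∃ n, m = n + 2 := ⟨m - 2, by omega⟩
        push_cast
        ring_nf
    · intro m hm hm2
      simp only [Finset.mem_Icc] at hm hm2
      have : m = 1 := by omega
      subst this
      simp
  have hz : (∑ k ∈ Finset.Icc 1 j, (1/2) * (b (k+1) * (((k:ℝ)+1) * ((k:ℝ) * t^(k-1)))))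
      + ∑ k ∈ Finset.Icc 1 j, c * (b k * ((k:ℝ) * t ^ (k-1))) = 0 := by
    rw [← Finset.sum_add_distrib]
    refine Finset.sum_eq_zero fun k hk => ?_
    linear_combination t ^ (k-1) * hrec k hk
  rw [h2, Finset.sum_Icc_succ_top (by omega : 1 ≤ j + 1), mul_sum, mul_add, mul_sum]
  simp only [Nat.add_sub_cancel, Nat.cast_add, Nat.cast_one]
  linear_combination hz + t ^ j * htop

lemma deriv_part (i lam : ℝ) (h : (1/2) * i^2 + (1/2) * i - 1 = lam) (j : ℕ)
    (P P₁ P₂ : ℝ → ℝ)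
    (hP : ∀ t, HasDerivAt P (P₁ t) t)
    (hP₁ : ∀ t, HasDerivAt P₁ (P₂ t) t)
    (hkey : ∀ t, (1/2) * P₂ t + (i + 1/2) * P₁ t = t ^ j)
    (x : ℝ) (hx : 0 < x) :
    (1/2) * x^2 * deriv (deriv (fun y : ℝ => y ^ i * P (Real.log y))) x
      + x * deriv (fun y : ℝ => y ^ i * P (Real.log y)) x
      - (1 + lam) * (x ^ i * P (Real.log x))
    = x ^ i * (Real.log x) ^ j := by
  set U : ℝ → ℝ := fun y => i * y ^ (i-1) * P (Real.log y) + y ^ i * (P₁ (Real.log y) * y⁻¹)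
    with hU_def
  have hDu : ∀ y : ℝ, 0 < y → HasDerivAt (fun z : ℝ => z ^ i * P (Real.log z)) (U y) y := by
    intro y hy
    have h1 : HasDerivAt (fun z : ℝ => z ^ i) (i * y ^ (i-1)) y :=
      Real.hasDerivAt_rpow_const (Or.inl hy.ne')
    have h2 : HasDerivAt (fun z : ℝ => P (Real.log z)) (P₁ (Real.log y) * y⁻¹) y :=
      (hP (Real.log y)).comp y (Real.hasDerivAt_log hy.ne')
    exact h1.mul h2
  have hev : deriv (fun z : ℝ => z ^ i * P (Real.log z)) =ᶠ[nhds x] U := by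
    filter_upwards [isOpen_Ioi.mem_nhds hx] with y hy
    exact (hDu y hy).deriv
  have hA : HasDerivAt (fun y : ℝ => i * y ^ (i-1) * P (Real.log y))
      (i * ((i-1) * x ^ (i-1-1)) * P (Real.log x)
        + i * x ^ (i-1) * (P₁ (Real.log x) * x⁻¹)) x :=
    ((Real.hasDerivAt_rpow_const (Or.inl hx.ne')).const_mul i).mul
      ((hP (Real.log x)).comp x (Real.hasDerivAt_log hx.ne'))
  have hB : HasDerivAt (fun y : ℝ => y ^ i * (P₁ (Real.log y) * y⁻¹))
      (i * x ^ (i-1) * (P₁ (Real.log x) * x⁻¹)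
        + x ^ i * ((P₂ (Real.log x) * x⁻¹) * x⁻¹ + P₁ (Real.log x) * (-(x^2)⁻¹))) x :=
    (Real.hasDerivAt_rpow_const (Or.inl hx.ne')).mul
      (((hP₁ (Real.log x)).comp x (Real.hasDerivAt_log hx.ne')).mul (hasDerivAt_inv hx.ne'))
  have hdd : deriv (deriv (fun z : ℝ => z ^ i * P (Real.log z))) x
      = i * ((i-1) * x ^ (i-1-1)) * P (Real.log x)
        + i * x ^ (i-1) * (P₁ (Real.log x) * x⁻¹)
        + (i * x ^ (i-1) * (P₁ (Real.log x) * x⁻¹)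
          + x ^ i * ((P₂ (Real.log x) * x⁻¹) * x⁻¹ + P₁ (Real.log x) * (-(x^2)⁻¹))) := by
    rw [hev.deriv_eq]
    exact (hA.add hB).deriv
  rw [hdd, (hDu x hx).deriv]
  have e1 : x ^ (i-1) = x ^ i * x⁻¹ := by
    rw [Real.rpow_sub hx, Real.rpow_one, div_eq_mul_inv]
  have e2 : x ^ (i-1-1) = x ^ i * x⁻¹ * x⁻¹ := by
    rw [Real.rpow_sub hx, e1, Real.rpow_one, div_eq_mul_inv]
  have e3 : (x^2)⁻¹ = x⁻¹ * x⁻¹ := by rw [sq, mul_inv]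
  rw [hU_def, e1, e2, e3]
  simp only
  have hxi : x * x⁻¹ = 1 := mul_inv_cancel₀ hx.ne'
  rw [e1]
  linear_combination
    ((1/2) * (x * x⁻¹ + 1) * (x ^ i * (i*(i-1)*P (Real.log x) + 2*i*P₁ (Real.log x)
        + P₂ (Real.log x) - P₁ (Real.log x)))
      + x ^ i * (i * P (Real.log x) + P₁ (Real.log x))) * hxi
    + x ^ i * hkey (Real.log x) + (x ^ i * P (Real.log x)) * h

/-- **Resonant step of the formal expansion.** If `(1/2)i² + (1/2)i - 1 = λ` and
`i ≠ -1/2`, then for every `j ∈ ℕ` there are reals `b₁, …, b_{j+1}` with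
`b_{j+1} = ((j+1)(i+1/2))⁻¹` such that
`u(x) = x^i Σ_{m=1}^{j+1} b_m (log x)^m` solves
`(1/2)x²u'' + x u' - (1+λ)u = x^i (log x)^j` on `(0,∞)`. -/
theorem resonant_formal_step (lam i : ℝ)
    (h : (1/2) * i^2 + (1/2) * i - 1 = lam) (hi : i ≠ -1/2) (j : ℕ) :
    ∃ b : ℕ → ℝ, b (j+1) = (((j : ℝ) + 1) * (i + 1/2))⁻¹ ∧
      ∀ x : ℝ, 0 < x →
        (1/2) * x^2 *
            deriv (deriv (fun y : ℝ =>
              y ^ i * ∑ m ∈ Finset.Icc 1 (j+1), b m * (Real.log y) ^ m)) x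
          + x * deriv (fun y : ℝ =>
              y ^ i * ∑ m ∈ Finset.Icc 1 (j+1), b m * (Real.log y) ^ m) x
          - (1 + lam) *
              (x ^ i * ∑ m ∈ Finset.Icc 1 (j+1), b m * (Real.log x) ^ m)
        = x ^ i * (Real.log x) ^ j := by
  have hc : i + 1/2 ≠ 0 := fun h' => hi (by linarith)
  have hc2 : (2:ℝ) + i * 4 ≠ 0 := fun h' => hi (by linarith)
  have hc3 : i * 2 + 1 ≠ 0 := fun h' => hi (by linarith)
  set b : ℕ → ℝ := fun m => resCoeff i j (j+1-m) with hb_def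
  have hbtop : b (j+1) = (((j : ℝ) + 1) * (i + 1/2))⁻¹ := by
    simp [hb_def, resCoeff]
  refine ⟨b, hbtop, ?_⟩
  have hrec : ∀ k ∈ Finset.Icc 1 j,
      (i + 1/2) * (k : ℝ) * b k + (1/2) * ((k:ℝ)+1) * (k:ℝ) * b (k+1) = 0 := by
    intro k hk
    obtain ⟨hk1, hk2⟩ := Finset.mem_Icc.mp hk
    have h1 : j + 1 - k = (j - k) + 1 := by omega
    have h2 : j + 1 - (k + 1) = j - k := by omega
    have hcast : ((j - k : ℕ) : ℝ) = (j : ℝ) - (k : ℝ) := by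
      push_cast [Nat.cast_sub hk2]; ring
    rw [hb_def]
    simp only [h1, h2, resCoeff, hcast]
    field_simp [hc2]
    ring
  have htop : (i + 1/2) * ((j:ℝ)+1) * b (j+1) = 1 := by
    rw [hbtop]
    have hj1 : ((j : ℝ) + 1) ≠ 0 := by positivity
    field_simp [hc3]
  have hkey := poly_key (i + 1/2) j b hrec htop
  have hP : ∀ t : ℝ, HasDerivAt (fun t : ℝ => ∑ m ∈ Finset.Icc 1 (j+1), b m * t ^ m)
      (∑ m ∈ Finset.Icc 1 (j+1), b m * ((m:ℝ) * t ^ (m-1))) t := by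
    intro t
    exact HasDerivAt.fun_sum fun m _ => (hasDerivAt_pow m t).const_mul (b m)
  have hP₁ : ∀ t : ℝ,
      HasDerivAt (fun t : ℝ => ∑ m ∈ Finset.Icc 1 (j+1), b m * ((m:ℝ) * t ^ (m-1)))
      (∑ m ∈ Finset.Icc 1 (j+1), b m * ((m:ℝ) * (((m-1:ℕ):ℝ) * t ^ (m-1-1)))) t := by
    intro t
    exact HasDerivAt.fun_sum fun m _ =>
      ((hasDerivAt_pow (m-1) t).const_mul ((m : ℝ))).const_mul (b m)
  intro x hx
  exact deriv_part i lam h j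
    (fun t => ∑ m ∈ Finset.Icc 1 (j+1), b m * t ^ m)
    (fun t => ∑ m ∈ Finset.Icc 1 (j+1), b m * ((m:ℝ) * t ^ (m-1)))
    (fun t => ∑ m ∈ Finset.Icc 1 (j+1), b m * ((m:ℝ) * (((m-1:ℕ):ℝ) * t ^ (m-1-1))))
    hP hP₁ (fun t => hkey t) x hx
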